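/- The multiplicity of the minimum distance of the product code P = R × C equals E_R(d_r) * E_C(d_c) / (q-1), i.e., the number of codewords of P of weight d_r d_c is the product of the minimum-weight multiplicities of the component codes divided by q-1. -/

import Mathlib

private lemma stmt6_norm_smul {F : Type*} [Field F] [DecidableEq F] {n : ℕ} {k : F}
    (hk : k ≠ 0) (x : Fin n → F) : hammingNorm (k • x) = hammingNorm x :=
  hammingNorm_smul (fun _ a b h => mul_left_cancel₀ hk h) x

/-- The minimum-distance multiplicity of the product code `P = R × C` equals
`E_R(d_r) E_C(d_c) / (q-1)` (stated multiplicatively), assuming Tolhuizen's theorem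
that all codewords of weight below `w(d_r,d_c)` are rank-one. -/
theorem stmt6 (F : Type*) [Field F] [Fintype F] [DecidableEq F] (q nr nc dr dc : ℕ)
    (hq : Fintype.card F = q)
    (R : Submodule F (Fin nr → F)) (C : Submodule F (Fin nc → F))
    (hdr : dr = sInf {d | ∃ r ∈ R, r ≠ 0 ∧ hammingNorm r = d})
    (hdc : dc = sInf {d | ∃ c ∈ C, c ≠ 0 ∧ hammingNorm c = d})
    (hRne : ∃ r ∈ R, r ≠ 0) (hCne : ∃ c ∈ C, c ≠ 0)
    (P : Set (Fin nc → Fin nr → F))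
    (hP : P = {M | (∀ i, M i ∈ R) ∧ (∀ j, (fun i => M i j) ∈ C)})
    (wtM : (Fin nc → Fin nr → F) → ℕ)
    (hwt : ∀ M, wtM M = (Finset.univ.filter fun p : Fin nc × Fin nr => M p.1 p.2 ≠ 0).card)
    (hrank : ∀ M ∈ P,
      wtM M < dr * dc + max (dr * ((dc + q - 1) / q)) (dc * ((dr + q - 1) / q)) →
      ∃ r ∈ R, ∃ c ∈ C, M = fun i j => c i * r j) :
    Set.ncard {M ∈ P | wtM M = dr * dc} * (q - 1)
      = Set.ncard {r | r ∈ (R : Set (Fin nr → F)) ∧ hammingNorm r = dr} *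
        Set.ncard {c | c ∈ (C : Set (Fin nc → F)) ∧ hammingNorm c = dc} := by
  classical
  -- basic positivity facts
  have hq2 : 2 ≤ q := hq ▸ Fintype.one_lt_card
  have hdrle : ∀ r ∈ R, r ≠ 0 → dr ≤ hammingNorm r := fun r hR hne =>
    hdr ▸ Nat.sInf_le ⟨r, hR, hne, rfl⟩
  have hdcle : ∀ c ∈ C, c ≠ 0 → dc ≤ hammingNorm c := fun c hC hne =>
    hdc ▸ Nat.sInf_le ⟨c, hC, hne, rfl⟩
  have hdrpos : 0 < dr := by
    obtain ⟨r1, hr1R, hr1ne⟩ := hRne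
    have hmem : dr ∈ {d | ∃ r ∈ R, r ≠ 0 ∧ hammingNorm r = d} :=
      hdr ▸ Nat.sInf_mem ⟨_, r1, hr1R, hr1ne, rfl⟩
    obtain ⟨r', _, hr'ne, hr'w⟩ := hmem
    exact hr'w ▸ hammingNorm_pos_iff.2 hr'ne
  have hdcpos : 0 < dc := by
    obtain ⟨c1, hc1C, hc1ne⟩ := hCne
    have hmem : dc ∈ {d | ∃ c ∈ C, c ≠ 0 ∧ hammingNorm c = d} :=
      hdc ▸ Nat.sInf_mem ⟨_, c1, hc1C, hc1ne, rfl⟩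
    obtain ⟨c', _, hc'ne, hc'w⟩ := hmem
    exact hc'w ▸ hammingNorm_pos_iff.2 hc'ne
  -- weight of a rank-one matrix
  have hwt_prod : ∀ (r : Fin nr → F) (c : Fin nc → F),
      wtM (fun i j => c i * r j) = hammingNorm c * hammingNorm r := by
    intro r c
    rw [hwt]
    have hfe : (Finset.univ.filter fun p : Fin nc × Fin nr => c p.1 * r p.2 ≠ 0)
        = (Finset.univ.filter fun i => c i ≠ 0) ×ˢ (Finset.univ.filter fun j => r j ≠ 0) := by
      ext p
      simp [Finset.mem_filter, Finset.mem_product, mul_ne_zero_iff]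
    rw [hfe, Finset.card_product]
    rfl
  -- the strict inequality needed to apply `hrank`
  have hlt : ∀ M, wtM M = dr * dc →
      wtM M < dr * dc + max (dr * ((dc + q - 1) / q)) (dc * ((dr + q - 1) / q)) := by
    intro M hM
    have h1 : 1 ≤ (dc + q - 1) / q := by
      rw [Nat.one_le_div_iff (by omega)]
      omega
    have h2 : 1 ≤ dr * ((dc + q - 1) / q) := le_trans hdrpos (Nat.le_mul_of_pos_right _ h1)
    have := le_max_left (dr * ((dc + q - 1) / q)) (dc * ((dr + q - 1) / q))
    omega
  -- finset versions of the three sets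
  set A : Finset (Fin nr → F) :=
    Finset.univ.filter (fun r => r ∈ R ∧ hammingNorm r = dr) with hA
  set B : Finset (Fin nc → F) :=
    Finset.univ.filter (fun c => c ∈ C ∧ hammingNorm c = dc) with hB
  set S : Finset (Fin nc → Fin nr → F) :=
    Finset.univ.filter (fun M => M ∈ P ∧ wtM M = dr * dc) with hS
  have hsetS : {M ∈ P | wtM M = dr * dc} = ↑S := by
    ext M; simp [hS]
  have hsetA : {r | r ∈ (R : Set (Fin nr → F)) ∧ hammingNorm r = dr} = ↑A := by
    ext r; simp [hA]
  have hsetB : {c | c ∈ (C : Set (Fin nc → F)) ∧ hammingNorm c = dc} = ↑B := by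
    ext c; simp [hB]
  rw [hsetS, hsetA, hsetB, Set.ncard_coe_finset, Set.ncard_coe_finset, Set.ncard_coe_finset]
  -- the map sending a pair of min-weight words to a rank-one codeword
  have hmaps : ∀ p ∈ A ×ˢ B, (fun i j => p.2 i * p.1 j) ∈ S := by
    rintro ⟨r, c⟩ hp
    rw [Finset.mem_product] at hp
    obtain ⟨hrA, hcB⟩ := hp
    rw [hA, Finset.mem_filter] at hrA
    rw [hB, Finset.mem_filter] at hcB
    obtain ⟨-, hrR, hrw⟩ := hrA
    obtain ⟨-, hcC, hcw⟩ := hcB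
    rw [hS, Finset.mem_filter]
    refine ⟨Finset.mem_univ _, ?_, ?_⟩
    · rw [hP]
      constructor
      · intro i
        have : (fun j => c i * r j) = c i • r := rfl
        simpa [this] using R.smul_mem (c i) hrR
      · intro j
        have : (fun i => c i * r j) = r j • c := by
          funext i; simp [mul_comm]
        simpa [this] using C.smul_mem (r j) hcC
    · rw [hwt_prod, hrw, hcw, mul_comm]
  -- each fiber has exactly `q - 1` elements
  have hfiber : ∀ M ∈ S,
      ((A ×ˢ B).filter fun p => (fun i j => p.2 i * p.1 j) = M).card = q - 1 := by
    intro M hMS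
    rw [hS, Finset.mem_filter] at hMS
    obtain ⟨-, hMP, hMw⟩ := hMS
    obtain ⟨r₀, hr₀R, c₀, hc₀C, hM⟩ := hrank M hMP (hlt M hMw)
    have hwM : hammingNorm c₀ * hammingNorm r₀ = dr * dc := by
      rw [← hwt_prod, ← hM]; exact hMw
    have hr₀ne : r₀ ≠ 0 := by
      intro h; rw [h] at hwM; simp [hammingNorm_zero] at hwM
      rcases hwM with h' | h' <;> omega
    have hc₀ne : c₀ ≠ 0 := by
      intro h; rw [h] at hwM; simp [hammingNorm_zero] at hwM
      rcases hwM with h' | h' <;> omega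
    have har : dr ≤ hammingNorm r₀ := hdrle _ hr₀R hr₀ne
    have hac : dc ≤ hammingNorm c₀ := hdcle _ hc₀C hc₀ne
    have hr₀w : hammingNorm r₀ = dr := by nlinarith [hwM, har, hac, hdrpos, hdcpos]
    have hc₀w : hammingNorm c₀ = dc := by nlinarith [hwM, har, hac, hdrpos, hdcpos]
    obtain ⟨j₀, hj₀⟩ := Function.ne_iff.1 hr₀ne
    obtain ⟨i₀, hi₀⟩ := Function.ne_iff.1 hc₀ne
    simp only [Pi.zero_apply] at hj₀ hi₀
    have hcard0 : (Finset.univ.erase (0 : F)).card = q - 1 := by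
      rw [Finset.card_erase_of_mem (Finset.mem_univ _), Finset.card_univ, hq]
    rw [← hcard0]
    refine (Finset.card_bij (fun lam _ => (lam • r₀, lam⁻¹ • c₀)) ?_ ?_ ?_).symm
    · -- maps into the fiber
      intro lam hlam
      have hlne : lam ≠ 0 := Finset.ne_of_mem_erase hlam
      rw [Finset.mem_filter, Finset.mem_product]
      refine ⟨⟨?_, ?_⟩, ?_⟩
      · rw [hA, Finset.mem_filter]
        exact ⟨Finset.mem_univ _, R.smul_mem _ hr₀R, by rw [stmt6_norm_smul hlne, hr₀w]⟩
      · rw [hB, Finset.mem_filter]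
        exact ⟨Finset.mem_univ _, C.smul_mem _ hc₀C,
          by rw [stmt6_norm_smul (inv_ne_zero hlne), hc₀w]⟩
      · rw [hM]
        funext i j
        simp only [Pi.smul_apply, smul_eq_mul]
        field_simp
    · -- injective
      intro lam hlam lam' hlam' h
      have h1 := congrFun (congrArg Prod.fst h) j₀
      simp only [Pi.smul_apply, smul_eq_mul] at h1
      exact mul_right_cancel₀ hj₀ h1
    · -- surjective
      rintro ⟨r, c⟩ hp
      rw [Finset.mem_filter, Finset.mem_product] at hp
      obtain ⟨⟨hrA, hcB⟩, hfc⟩ := hp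
      rw [hA, Finset.mem_filter] at hrA
      rw [hB, Finset.mem_filter] at hcB
      have heq : ∀ i j, c i * r j = c₀ i * r₀ j := by
        intro i j
        have := congrFun (congrFun (hfc.trans hM) i) j
        exact this
      have hci₀ : c i₀ ≠ 0 := by
        intro h
        have := heq i₀ j₀
        rw [h, zero_mul] at this
        exact (mul_ne_zero hi₀ hj₀) this.symm
      refine ⟨c₀ i₀ / c i₀, Finset.mem_erase.2 ⟨div_ne_zero hi₀ hci₀, Finset.mem_univ _⟩, ?_⟩
      have hr : (c₀ i₀ / c i₀) • r₀ = r := by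
        funext j
        have := heq i₀ j
        simp only [Pi.smul_apply, smul_eq_mul]
        field_simp
        linear_combination -this
      have hrj₀ : r j₀ ≠ 0 := by
        rw [← hr]
        simp only [Pi.smul_apply, smul_eq_mul]
        exact mul_ne_zero (div_ne_zero hi₀ hci₀) hj₀
      have hc : (c₀ i₀ / c i₀)⁻¹ • c₀ = c := by
        funext i
        have h1 := heq i j₀
        have h2 := heq i₀ j₀
        have key : c i * c₀ i₀ = c₀ i * c i₀ := by
          have h3 : c i * r j₀ * (c₀ i₀ * r₀ j₀) = c₀ i * r₀ j₀ * (c i₀ * r j₀) := by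
            rw [h1, ← h2]
          have h4 : (c i * c₀ i₀) * (r j₀ * r₀ j₀) = (c₀ i * c i₀) * (r j₀ * r₀ j₀) := by
            linear_combination h3
          exact mul_right_cancel₀ (mul_ne_zero hrj₀ hj₀) h4
        simp only [Pi.smul_apply, smul_eq_mul]
        field_simp
        linear_combination -key
      exact Prod.ext hr hc
  -- put everything together
  have hcount : (A ×ˢ B).card = S.card * (q - 1) := by
    rw [Finset.card_eq_sum_card_fiberwise hmaps]
    rw [Finset.sum_congr rfl hfiber, Finset.sum_const, smul_eq_mul]
  rw [← Finset.card_product, ← hcount]
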